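/- Let q₁,q₂,q₃ ∈ ℝ[t] be nonzero polynomials of degrees m₁,m₂,m₃ such that every common divisor of q₁,q₂,q₃ is a unit. Let α,β,γ,δ ∈ ℝ with αδ−βγ ≠ 0, and for each i define Nᵢ(t) = Σ_{k=0}^{mᵢ} (coefficient of t^k in qᵢ)·(αt+β)^k·(γt+δ)^{mᵢ−k} ∈ ℝ[t]. Then every common divisor of N₁,N₂,N₃ is a unit. -/

import Mathlib

open Polynomial Finset

lemma eval_transform {K : Type*} [Field K] (p : K[X]) (a b c d t : K) (h : c*t+d ≠ 0) :
    (∑ k ∈ range (p.natDegree + 1),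
      C (p.coeff k) * (C a * X + C b) ^ k * (C c * X + C d) ^ (p.natDegree - k)).eval t
    = (c*t+d) ^ p.natDegree * p.eval ((a*t+b)/(c*t+d)) := by
  rw [eval_finset_sum, Polynomial.eval_eq_sum_range, Finset.mul_sum]
  apply Finset.sum_congr rfl
  intro k hk
  have hk' : k ≤ p.natDegree := Nat.lt_succ_iff.mp (Finset.mem_range.mp hk)
  have hpow : (c*t+d) ^ p.natDegree = (c*t+d) ^ (p.natDegree - k) * (c*t+d) ^ k := by
    rw [← pow_add, Nat.sub_add_cancel hk']
  simp only [eval_mul, eval_pow, eval_add, eval_C, eval_X]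
  rw [hpow, div_pow]
  field_simp
  have hinv : (t*c+d)⁻¹ ^ k * (t*c+d) ^ k = 1 := by
    rw [← mul_pow, inv_mul_cancel₀ (by rwa [mul_comm t c]), one_pow]
  linear_combination (-(p.coeff k * (a*t+b)^k * (t*c+d)^(p.natDegree-k))) * hinv

lemma transform_ne_zero (p : ℝ[X]) (hp : p ≠ 0) (a b c d : ℝ) (h : a*d - b*c ≠ 0) :
    (∑ k ∈ range (p.natDegree + 1),
      C (p.coeff k) * (C a * X + C b) ^ k * (C c * X + C d) ^ (p.natDegree - k)) ≠ 0 := by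
  intro hN
  apply hp
  apply Polynomial.eq_zero_of_infinite_isRoot
  have hS : {t : ℝ | c*t+d ≠ 0}.Infinite := by
    have hfin : {t : ℝ | ¬ (c*t+d ≠ 0)}.Finite := by
      rcases eq_or_ne c 0 with hc | hc
      · have hd : d ≠ 0 := by intro hd0; apply h; rw [hc, hd0]; ring
        convert Set.finite_empty using 1
        ext t; simp [hc, hd]
      · apply Set.Finite.subset (Set.finite_singleton (-d/c))
        intro t ht
        simp only [Set.mem_setOf_eq, not_not] at ht
        simp only [Set.mem_singleton_iff]
        field_simp
        linarith
    have := hfin.infinite_compl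
    simpa [Set.compl_setOf] using this
  have hinj : Set.InjOn (fun t => (a*t+b)/(c*t+d)) {t : ℝ | c*t+d ≠ 0} := by
    intro t1 h1 t2 h2 he
    simp only [Set.mem_setOf_eq] at h1 h2
    simp only [div_eq_div_iff h1 h2] at he
    have : (a*d - b*c)*(t1-t2) = 0 := by linear_combination he
    rcases mul_eq_zero.mp this with h' | h'
    · exact absurd h' h
    · linarith
  apply Set.Infinite.mono ?_ (hS.image hinj)
  rintro x ⟨t, ht, rfl⟩
  have hid := eval_transform p a b c d t ht
  rw [hN, eval_zero] at hid
  have hpow : (c*t+d) ^ p.natDegree ≠ 0 := pow_ne_zero _ ht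
  simp only [Set.mem_setOf_eq, IsRoot]
  exact (mul_eq_zero.mp hid.symm).resolve_left hpow

/-- Claim in the proof of Lemma 5 (Bt): if `gcd(q₁,q₂,q₃) = 1`, then the numerators
`Nᵢ` of `qᵢ(ψ(t))` obtained by clearing denominators satisfy `gcd(N₁,N₂,N₃) = 1`. -/
theorem stmt_11 (q : Fin 3 → ℝ[X]) (hq : ∀ i, q i ≠ 0)
    (hgcd : ∀ d : ℝ[X], (∀ i, d ∣ q i) → IsUnit d)
    (α β γ δ : ℝ) (hmob : α * δ - β * γ ≠ 0)
    (N : Fin 3 → ℝ[X])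
    (hN : ∀ i, N i = ∑ k ∈ range ((q i).natDegree + 1),
      C ((q i).coeff k) * (C α * X + C β) ^ k * (C γ * X + C δ) ^ ((q i).natDegree - k)) :
    ∀ d : ℝ[X], (∀ i, d ∣ N i) → IsUnit d := by
  intro d hd
  by_contra hu
  set f := algebraMap ℝ ℂ with hf
  have hfinj : Function.Injective f := (algebraMap ℝ ℂ).injective
  have hN0 : N 0 ≠ 0 := by rw [hN 0]; exact transform_ne_zero _ (hq 0) α β γ δ hmob
  have hd0 : d ≠ 0 := by rintro rfl; exact hN0 (zero_dvd_iff.mp (hd 0))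
  have hdeg : 0 < (d.map f).degree := by
    rw [Polynomial.degree_map]
    rw [← Polynomial.natDegree_pos_iff_degree_pos]
    rcases Nat.eq_zero_or_pos d.natDegree with h | h
    · exact absurd (Polynomial.isUnit_iff_degree_eq_zero.mpr
        (by rw [Polynomial.degree_eq_natDegree hd0, h]; rfl)) hu
    · exact h
  obtain ⟨z, hz⟩ := Complex.exists_root hdeg
  -- mapped numerators
  have hmap : ∀ i, (N i).map f = ∑ k ∈ range (((q i).map f).natDegree + 1),
      C (((q i).map f).coeff k) * (C (f α) * X + C (f β)) ^ k *
        (C (f γ) * X + C (f δ)) ^ (((q i).map f).natDegree - k) := by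
    intro i
    rw [hN i, Polynomial.map_sum, Polynomial.natDegree_map]
    refine Finset.sum_congr rfl fun k _ => ?_
    simp [Polynomial.map_mul, Polynomial.map_pow, Polynomial.map_add, coeff_map]
  have hroot : ∀ i, ((N i).map f).eval z = 0 := by
    intro i
    obtain ⟨e, he⟩ := hd i
    rw [he, Polynomial.map_mul, eval_mul, hz, zero_mul]
  rcases eq_or_ne (f γ * z + f δ) 0 with hcz | hcz
  · -- pole case: leading term of N 0 can't vanish
    have hγ : γ ≠ 0 := by
      rintro rfl
      simp only [map_zero, zero_mul, zero_add] at hcz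
      have hδ : δ = 0 := hfinj (by simpa using hcz)
      apply hmob; rw [hδ]; ring
    have h0 := hroot 0
    rw [hmap 0, eval_finset_sum] at h0
    set m := ((q 0).map f).natDegree with hm
    rw [Finset.sum_eq_single_of_mem m (Finset.self_mem_range_succ m)] at h0
    · simp only [eval_mul, eval_pow, eval_add, eval_C, eval_X, Nat.sub_self, pow_zero, mul_one] at h0
      have hc : ((q 0).map f).coeff m ≠ 0 := by
        rw [hm, ← Polynomial.leadingCoeff]
        simpa [Polynomial.leadingCoeff_map] using fun h => hq 0 (leadingCoeff_eq_zero.mp (hfinj (by simpa using h)))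
      have hab : f α * z + f β ≠ 0 := by
        intro ha
        apply hmob
        apply hfinj
        have : f α * f δ - f β * f γ = 0 := by linear_combination f α * hcz - f γ * ha
        simpa [map_sub, map_mul] using this
      exact (mul_ne_zero hc (pow_ne_zero _ hab)) h0
    · intro k hk hkm
      have : m - k ≠ 0 := by
        have := Finset.mem_range.mp hk; omega
      simp [eval_mul, eval_pow, eval_add, eval_C, eval_X, hcz, zero_pow this]
  · -- regular case: common root of the qᵢ contradicts Bézout
    set w := (f α * z + f β) / (f γ * z + f δ) with hw
    have hqr : ∀ i, Polynomial.aeval w (q i) = 0 := by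
      intro i
      have h0 := hroot i
      rw [hmap i, eval_transform ((q i).map f) (f α) (f β) (f γ) (f δ) z hcz] at h0
      have := (mul_eq_zero.mp h0).resolve_left (pow_ne_zero _ hcz)
      rw [Polynomial.aeval_def, ← Polynomial.eval_map]
      exact this
    set g1 := EuclideanDomain.gcd (q 0) (q 1) with hg1
    set g := EuclideanDomain.gcd g1 (q 2) with hg
    have hgu : IsUnit g := by
      apply hgcd
      intro i
      fin_cases i
      · exact dvd_trans (EuclideanDomain.gcd_dvd_left _ _) (EuclideanDomain.gcd_dvd_left _ _)
      · exact dvd_trans (EuclideanDomain.gcd_dvd_left _ _) (EuclideanDomain.gcd_dvd_right _ _)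
      · exact EuclideanDomain.gcd_dvd_right _ _
    have hg1w : Polynomial.aeval w g1 = 0 := by
      rw [hg1, EuclideanDomain.gcd_eq_gcd_ab (q 0) (q 1)]
      simp [map_add, map_mul, hqr 0, hqr 1]
    have hgw : Polynomial.aeval w g = 0 := by
      rw [hg, EuclideanDomain.gcd_eq_gcd_ab g1 (q 2)]
      simp [map_add, map_mul, hg1w, hqr 2]
    obtain ⟨r, hr, hrg⟩ := Polynomial.isUnit_iff.mp hgu
    rw [← hrg] at hgw
    simp only [Polynomial.aeval_C] at hgw
    exact hr.ne_zero (hfinj (by simpa using hgw))
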